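/- Let A and A' be two n-dimensional algebras over a finite field K. If A and A' are isomorphic, then the vertex-colored graphs G₂(A) and G₂(A') are isomorphic. Reciprocally, if G₂(A) and G₂(A') are isomorphic, then there exists a multiplicative bijective map between A and A', that is, a bijection f : A → A' (not necessarily linear) such that f(u)f(v) = f(uv) for all u, v ∈ A. -/

import Mathlib

/-- Vertices of the graphs `G₁(A)` and `G₂(A)`: row vertices `r u`, column
vertices `c u`, symbol vertices `s u` and cell vertices `t u v`. -/
inductive Vert (A : Type*) : Type _
  | r : A → Vert A
  | c : A → Vert A
  | s : A → Vert A
  | t : A → A → Vert A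

section Graphs

variable {A : Type*} [Zero A]

/-- The left annihilator `Ann_{A⁻}(A)` of the algebra with product `mul`. -/
def annL (mul : A → A → A) : Set A := {u | ∀ v, mul u v = 0}

/-- The right annihilator `Ann_{A⁺}(A)` of the algebra with product `mul`. -/
def annR (mul : A → A → A) : Set A := {u | ∀ v, mul v u = 0}

/-- The derived set `A² = {uv : u, v ∈ A}` of the algebra with product `mul`. -/
def derived (mul : A → A → A) : Set A := {w | ∃ u v, mul u v = w}

/-- The vertex set of `G₁(A)` and `G₂(A)`:
`R_A = {r_u : u ∈ A ∖ Ann_{A⁻}(A)}`, `C_A = {c_u : u ∈ A ∖ Ann_{A⁺}(A)}`,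
`S_A = {s_u : u ∈ A² ∖ {0}}`, `T_A = {t_{u,v} : u, v ∈ A, uv ≠ 0}`. -/
def IsVert (mul : A → A → A) : Vert A → Prop
  | .r u => u ∉ annL mul
  | .c u => u ∉ annR mul
  | .s u => u ∈ derived mul ∧ u ≠ 0
  | .t u v => mul u v ≠ 0

/-- The adjacency relation of `G₁(A)`: edges `r_u t_{u,v}`, `c_v t_{u,v}` and
`s_{uv} t_{u,v}` for every `u, v ∈ A` with `uv ≠ 0`. -/
inductive G1Adj (mul : A → A → A) : Vert A → Vert A → Prop
  | rt (u v : A) : mul u v ≠ 0 → G1Adj mul (.r u) (.t u v)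
  | tr (u v : A) : mul u v ≠ 0 → G1Adj mul (.t u v) (.r u)
  | ct (u v : A) : mul u v ≠ 0 → G1Adj mul (.c v) (.t u v)
  | tc (u v : A) : mul u v ≠ 0 → G1Adj mul (.t u v) (.c v)
  | st (u v : A) : mul u v ≠ 0 → G1Adj mul (.s (mul u v)) (.t u v)
  | ts (u v : A) : mul u v ≠ 0 → G1Adj mul (.t u v) (.s (mul u v))

lemma G1Adj.ne {mul : A → A → A} {x y : Vert A} (h : G1Adj mul x y) : x ≠ y := by
  cases h <;> simp

/-- The graph `G₁(A)`, on the vertex set `R_A ∪ C_A ∪ S_A ∪ T_A`. -/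
def G1 (mul : A → A → A) : SimpleGraph {x : Vert A // IsVert mul x} where
  Adj x y := G1Adj mul x.1 y.1
  symm := ⟨by rintro ⟨x, hx⟩ ⟨y, hy⟩ h; cases h <;> constructor <;> assumption⟩
  loopless := ⟨fun x h => G1Adj.ne h rfl⟩

/-- The adjacency relation of `G₂(A)`: that of `G₁(A)` together with the extra
edges `r_u c_u` for `u ∈ A ∖ Ann_A(A)`, `c_u s_u` for `u ∈ A² ∖ Ann_{A⁺}(A)`
and `r_u s_u` for `u ∈ A² ∖ Ann_{A⁻}(A)`. -/
inductive G2Adj (mul : A → A → A) : Vert A → Vert A → Prop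
  | g1 {x y : Vert A} : G1Adj mul x y → G2Adj mul x y
  | rc (u : A) : u ∉ annL mul ∩ annR mul → G2Adj mul (.r u) (.c u)
  | cr (u : A) : u ∉ annL mul ∩ annR mul → G2Adj mul (.c u) (.r u)
  | cs (u : A) : u ∈ derived mul \ annR mul → G2Adj mul (.c u) (.s u)
  | sc (u : A) : u ∈ derived mul \ annR mul → G2Adj mul (.s u) (.c u)
  | rs (u : A) : u ∈ derived mul \ annL mul → G2Adj mul (.r u) (.s u)
  | sr (u : A) : u ∈ derived mul \ annL mul → G2Adj mul (.s u) (.r u)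

lemma G2Adj.ne {mul : A → A → A} {x y : Vert A} (h : G2Adj mul x y) : x ≠ y := by
  cases h with
  | g1 h => exact h.ne
  | _ => simp

/-- The graph `G₂(A)`, on the vertex set `R_A ∪ C_A ∪ S_A ∪ T_A`. -/
def G2 (mul : A → A → A) : SimpleGraph {x : Vert A // IsVert mul x} where
  Adj x y := G2Adj mul x.1 y.1
  symm := ⟨by
    rintro ⟨x, hx⟩ ⟨y, hy⟩ h
    cases h with
    | g1 h => exact .g1 (by cases h <;> constructor <;> assumption)
    | rc u h => exact .cr u h
    | cr u h => exact .rc u h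
    | cs u h => exact .sc u h
    | sc u h => exact .cs u h
    | rs u h => exact .sr u h
    | sr u h => exact .rs u h⟩
  loopless := ⟨fun x h => G2Adj.ne h rfl⟩

/-- The color of a vertex: row, column, symbol or cell. -/
def Vert.color : Vert A → Fin 4
  | .r _ => 0
  | .c _ => 1
  | .s _ => 2
  | .t _ _ => 3

end Graphs

section Inversion

variable {A : Type*} [Zero A] {mul : A → A → A}

lemma G2Adj.inv_rt {a p q : A} (h : G2Adj mul (.r a) (.t p q)) : a = p := by
  cases h with
  | g1 h => cases h; rfl

lemma G2Adj.inv_ct {a p q : A} (h : G2Adj mul (.c a) (.t p q)) : a = q := by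
  cases h with
  | g1 h => cases h; rfl

lemma G2Adj.inv_st {a p q : A} (h : G2Adj mul (.s a) (.t p q)) : a = mul p q := by
  cases h with
  | g1 h => cases h; rfl

lemma G2Adj.inv_rc {a b : A} (h : G2Adj mul (.r a) (.c b)) : a = b := by
  cases h with
  | g1 h => cases h
  | rc u hu => rfl

lemma G2Adj.inv_rs {a b : A} (h : G2Adj mul (.r a) (.s b)) : a = b := by
  cases h with
  | g1 h => cases h
  | rs u hu => rfl

lemma G2Adj.inv_cs {a b : A} (h : G2Adj mul (.c a) (.s b)) : a = b := by
  cases h with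
  | g1 h => cases h
  | cs u hu => rfl

lemma eq_r_of_color {x : Vert A} (h : x.color = 0) : ∃ w, x = .r w := by
  cases x
  · exact ⟨_, rfl⟩
  all_goals (simp only [Vert.color] at h; exact absurd h (by decide))

lemma eq_c_of_color {x : Vert A} (h : x.color = 1) : ∃ w, x = .c w := by
  cases x
  case c => exact ⟨_, rfl⟩
  all_goals (simp only [Vert.color] at h; exact absurd h (by decide))

lemma eq_s_of_color {x : Vert A} (h : x.color = 2) : ∃ w, x = .s w := by
  cases x
  case s => exact ⟨_, rfl⟩
  all_goals (simp only [Vert.color] at h; exact absurd h (by decide))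

lemma eq_t_of_color {x : Vert A} (h : x.color = 3) : ∃ w z, x = .t w z := by
  cases x
  case t => exact ⟨_, _, rfl⟩
  all_goals (simp only [Vert.color] at h; exact absurd h (by decide))

end Inversion

set_option linter.unusedSectionVars false

section Recon

variable {A B : Type*} [Zero A] [Zero B]

attribute [local instance] Classical.propDecidable

def getR : Vert B → B | .r u => u | _ => 0
def getC : Vert B → B | .c u => u | _ => 0
def getS : Vert B → B | .s u => u | _ => 0

variable {mulA : A → A → A} {mulB : B → B → B}

noncomputable def fr (φ : G2 mulA ≃g G2 mulB) (u : A) : B :=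
  if h : u ∉ annL mulA then getR (φ ⟨.r u, h⟩).1 else 0

noncomputable def fc (φ : G2 mulA ≃g G2 mulB) (u : A) : B :=
  if h : u ∉ annR mulA then getC (φ ⟨.c u, h⟩).1 else 0

noncomputable def fs (φ : G2 mulA ≃g G2 mulB) (u : A) : B :=
  if h : u ∈ derived mulA ∧ u ≠ 0 then getS (φ ⟨.s u, h⟩).1 else 0

variable (φ : G2 mulA ≃g G2 mulB) (hcol : ∀ x, (φ x).1.color = x.1.color)

include hcol

lemma fr_spec (u : A) (h : u ∉ annL mulA) :
    (φ ⟨.r u, h⟩).1 = .r (fr φ u) := by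
  obtain ⟨w, hw⟩ := eq_r_of_color (x := (φ ⟨.r u, h⟩).1) ((hcol ⟨.r u, h⟩).trans rfl)
  rw [fr, dif_pos h, hw]
  rfl

lemma fc_spec (u : A) (h : u ∉ annR mulA) :
    (φ ⟨.c u, h⟩).1 = .c (fc φ u) := by
  obtain ⟨w, hw⟩ := eq_c_of_color (x := (φ ⟨.c u, h⟩).1) ((hcol ⟨.c u, h⟩).trans rfl)
  rw [fc, dif_pos h, hw]
  rfl

lemma fs_spec (u : A) (h : u ∈ derived mulA ∧ u ≠ 0) :
    (φ ⟨.s u, h⟩).1 = .s (fs φ u) := by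
  obtain ⟨w, hw⟩ := eq_s_of_color (x := (φ ⟨.s u, h⟩).1) ((hcol ⟨.s u, h⟩).trans rfl)
  rw [fs, dif_pos h, hw]
  rfl

lemma fr_mem (u : A) (h : u ∉ annL mulA) : fr φ u ∉ annL mulB := by
  have h2 := (φ ⟨.r u, h⟩).2
  rw [fr_spec φ hcol u h] at h2
  exact h2

lemma fc_mem (u : A) (h : u ∉ annR mulA) : fc φ u ∉ annR mulB := by
  have h2 := (φ ⟨.c u, h⟩).2
  rw [fc_spec φ hcol u h] at h2
  exact h2

lemma fs_mem (u : A) (h : u ∈ derived mulA ∧ u ≠ 0) :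
    fs φ u ∈ derived mulB ∧ fs φ u ≠ 0 := by
  have h2 := (φ ⟨.s u, h⟩).2
  rw [fs_spec φ hcol u h] at h2
  exact h2

lemma t_spec (u v : A) (h : mulA u v ≠ 0) :
    (φ ⟨.t u v, h⟩).1 = .t (fr φ u) (fc φ v) := by
  have hu : u ∉ annL mulA := fun hu => h (hu v)
  have hv : v ∉ annR mulA := fun hv => h (hv u)
  obtain ⟨p, q, hpq⟩ := eq_t_of_color (x := (φ ⟨.t u v, h⟩).1) ((hcol ⟨.t u v, h⟩).trans rfl)
  have hR : G2Adj mulB ((φ ⟨.r u, hu⟩).1) ((φ ⟨.t u v, h⟩).1) :=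
    φ.map_rel_iff.mpr (G2Adj.g1 (G1Adj.rt u v h))
  have hC : G2Adj mulB ((φ ⟨.c v, hv⟩).1) ((φ ⟨.t u v, h⟩).1) :=
    φ.map_rel_iff.mpr (G2Adj.g1 (G1Adj.ct u v h))
  rw [fr_spec φ hcol u hu, hpq] at hR
  rw [fc_spec φ hcol v hv, hpq] at hC
  rw [hpq, ← hR.inv_rt, ← hC.inv_ct]

lemma t_mul (u v : A) (h : mulA u v ≠ 0) :
    mulB (fr φ u) (fc φ v) = fs φ (mulA u v) := by
  have hs : mulA u v ∈ derived mulA ∧ mulA u v ≠ 0 := ⟨⟨u, v, rfl⟩, h⟩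
  have hS : G2Adj mulB ((φ ⟨.s (mulA u v), hs⟩).1) ((φ ⟨.t u v, h⟩).1) :=
    φ.map_rel_iff.mpr (G2Adj.g1 (G1Adj.st u v h))
  rw [fs_spec φ hcol _ hs, t_spec φ hcol u v h] at hS
  exact hS.inv_st.symm

lemma fr_eq_fc (u : A) (h1 : u ∉ annL mulA) (h2 : u ∉ annR mulA) : fr φ u = fc φ u := by
  have h' : G2Adj mulB ((φ ⟨.r u, h1⟩).1) ((φ ⟨.c u, h2⟩).1) :=
    φ.map_rel_iff.mpr (G2Adj.rc u (fun hm => h1 hm.1))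
  rw [fr_spec φ hcol u h1, fc_spec φ hcol u h2] at h'
  exact h'.inv_rc

lemma fr_eq_fs (u : A) (h1 : u ∉ annL mulA) (hd : u ∈ derived mulA) (h0 : u ≠ 0) :
    fr φ u = fs φ u := by
  have h' : G2Adj mulB ((φ ⟨.r u, h1⟩).1) ((φ ⟨.s u, ⟨hd, h0⟩⟩).1) :=
    φ.map_rel_iff.mpr (G2Adj.rs u ⟨hd, h1⟩)
  rw [fr_spec φ hcol u h1, fs_spec φ hcol u ⟨hd, h0⟩] at h'
  exact h'.inv_rs

lemma fc_eq_fs (u : A) (h2 : u ∉ annR mulA) (hd : u ∈ derived mulA) (h0 : u ≠ 0) :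
    fc φ u = fs φ u := by
  have h' : G2Adj mulB ((φ ⟨.c u, h2⟩).1) ((φ ⟨.s u, ⟨hd, h0⟩⟩).1) :=
    φ.map_rel_iff.mpr (G2Adj.cs u ⟨hd, h2⟩)
  rw [fc_spec φ hcol u h2, fs_spec φ hcol u ⟨hd, h0⟩] at h'
  exact h'.inv_cs

variable (hcol' : ∀ x, (φ.symm x).1.color = x.1.color)

include hcol'

lemma fr_fr (u : A) (h : u ∉ annL mulA) : fr φ.symm (fr φ u) = u := by
  have h' := fr_mem φ hcol u h
  have hspec := fr_spec φ.symm hcol' (fr φ u) h'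
  have he : (⟨.r (fr φ u), h'⟩ : {x // IsVert mulB x}) = φ ⟨.r u, h⟩ :=
    Subtype.ext (fr_spec φ hcol u h).symm
  rw [he, φ.symm_apply_apply] at hspec
  exact (Vert.r.inj hspec).symm

lemma fc_fc (u : A) (h : u ∉ annR mulA) : fc φ.symm (fc φ u) = u := by
  have h' := fc_mem φ hcol u h
  have hspec := fc_spec φ.symm hcol' (fc φ u) h'
  have he : (⟨.c (fc φ u), h'⟩ : {x // IsVert mulB x}) = φ ⟨.c u, h⟩ :=
    Subtype.ext (fc_spec φ hcol u h).symm
  rw [he, φ.symm_apply_apply] at hspec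
  exact (Vert.c.inj hspec).symm

lemma fs_fs (u : A) (h : u ∈ derived mulA ∧ u ≠ 0) : fs φ.symm (fs φ u) = u := by
  have h' := fs_mem φ hcol u h
  have hspec := fs_spec φ.symm hcol' (fs φ u) h'
  have he : (⟨.s (fs φ u), h'⟩ : {x // IsVert mulB x}) = φ ⟨.s u, h⟩ :=
    Subtype.ext (fs_spec φ hcol u h).symm
  rw [he, φ.symm_apply_apply] at hspec
  exact (Vert.s.inj hspec).symm

lemma fc_mem_annL (u : A) (h1 : u ∈ annL mulA) (h2 : u ∉ annR mulA) :
    fc φ u ∈ annL mulB := by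
  by_contra hB
  have hcv := fc_mem φ hcol u h2
  have h' : G2Adj mulA ((φ.symm ⟨.r (fc φ u), hB⟩).1) ((φ.symm ⟨.c (fc φ u), hcv⟩).1) :=
    φ.symm.map_rel_iff.mpr (G2Adj.rc _ (fun hm => hB hm.1))
  have he : (⟨.c (fc φ u), hcv⟩ : {x // IsVert mulB x}) = φ ⟨.c u, h2⟩ :=
    Subtype.ext (fc_spec φ hcol u h2).symm
  rw [he, φ.symm_apply_apply, fr_spec φ.symm hcol' (fc φ u) hB] at h'
  have := fr_mem φ.symm hcol' (fc φ u) hB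
  rw [h'.inv_rc] at this
  exact this h1

lemma fr_mem_annR (u : A) (h1 : u ∉ annL mulA) (h2 : u ∈ annR mulA) :
    fr φ u ∈ annR mulB := by
  by_contra hB
  have hrv := fr_mem φ hcol u h1
  have h' : G2Adj mulA ((φ.symm ⟨.r (fr φ u), hrv⟩).1) ((φ.symm ⟨.c (fr φ u), hB⟩).1) :=
    φ.symm.map_rel_iff.mpr (G2Adj.rc _ (fun hm => hB hm.2))
  have he : (⟨.r (fr φ u), hrv⟩ : {x // IsVert mulB x}) = φ ⟨.r u, h1⟩ :=
    Subtype.ext (fr_spec φ hcol u h1).symm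
  rw [he, φ.symm_apply_apply, fc_spec φ.symm hcol' (fr φ u) hB] at h'
  have := fc_mem φ.symm hcol' (fr φ u) hB
  rw [← h'.inv_rc] at this
  exact this h2

lemma fs_mem_annL (u : A) (hd : u ∈ derived mulA) (h0 : u ≠ 0) (h1 : u ∈ annL mulA) :
    fs φ u ∈ annL mulB := by
  by_contra hB
  have hsv := fs_mem φ hcol u ⟨hd, h0⟩
  have h' : G2Adj mulA ((φ.symm ⟨.r (fs φ u), hB⟩).1) ((φ.symm ⟨.s (fs φ u), hsv⟩).1) :=
    φ.symm.map_rel_iff.mpr (G2Adj.rs _ ⟨hsv.1, hB⟩)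
  have he : (⟨.s (fs φ u), hsv⟩ : {x // IsVert mulB x}) = φ ⟨.s u, ⟨hd, h0⟩⟩ :=
    Subtype.ext (fs_spec φ hcol u ⟨hd, h0⟩).symm
  rw [he, φ.symm_apply_apply, fr_spec φ.symm hcol' (fs φ u) hB] at h'
  have := fr_mem φ.symm hcol' (fs φ u) hB
  rw [h'.inv_rs] at this
  exact this h1

lemma fs_mem_annR (u : A) (hd : u ∈ derived mulA) (h0 : u ≠ 0) (h2 : u ∈ annR mulA) :
    fs φ u ∈ annR mulB := by
  by_contra hB
  have hsv := fs_mem φ hcol u ⟨hd, h0⟩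
  have h' : G2Adj mulA ((φ.symm ⟨.c (fs φ u), hB⟩).1) ((φ.symm ⟨.s (fs φ u), hsv⟩).1) :=
    φ.symm.map_rel_iff.mpr (G2Adj.cs _ ⟨hsv.1, hB⟩)
  have he : (⟨.s (fs φ u), hsv⟩ : {x // IsVert mulB x}) = φ ⟨.s u, ⟨hd, h0⟩⟩ :=
    Subtype.ext (fs_spec φ hcol u ⟨hd, h0⟩).symm
  rw [he, φ.symm_apply_apply, fc_spec φ.symm hcol' (fs φ u) hB] at h'
  have := fc_mem φ.symm hcol' (fs φ u) hB
  rw [h'.inv_cs] at this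
  exact this h2

end Recon

section Glue

variable {A B : Type*} [Zero A] [Zero B]

attribute [local instance] Classical.propDecidable

/-- The residual set: annihilator elements that are nonzero and not products. -/
def Rst (mul : A → A → A) : Set A :=
  {u | u ∈ annL mul ∧ u ∈ annR mul ∧ ¬(u ∈ derived mul ∧ u ≠ 0) ∧ u ≠ 0}

variable {mulA : A → A → A} {mulB : B → B → B}

noncomputable def glue (φ : G2 mulA ≃g G2 mulB) (e : ↥(Rst mulA) ≃ ↥(Rst mulB)) (u : A) : B :=
  if h1 : u ∉ annL mulA then fr φ u
  else if h2 : u ∉ annR mulA then fc φ u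
  else if h3 : u ∈ derived mulA ∧ u ≠ 0 then fs φ u
  else if h4 : u = 0 then 0
  else (e ⟨u, not_not.mp h1, not_not.mp h2, h3, h4⟩).1

variable (φ : G2 mulA ≃g G2 mulB) (e : ↥(Rst mulA) ≃ ↥(Rst mulB))

lemma glue_case1 (u : A) (h1 : u ∉ annL mulA) : glue φ e u = fr φ u := dif_pos h1

lemma glue_case2 (u : A) (h1 : u ∈ annL mulA) (h2 : u ∉ annR mulA) :
    glue φ e u = fc φ u := by
  rw [glue, dif_neg (not_not.mpr h1), dif_pos h2]

lemma glue_case3 (u : A) (h1 : u ∈ annL mulA) (h2 : u ∈ annR mulA)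
    (h3 : u ∈ derived mulA ∧ u ≠ 0) : glue φ e u = fs φ u := by
  rw [glue, dif_neg (not_not.mpr h1), dif_neg (not_not.mpr h2), dif_pos h3]

lemma glue_zero (h0A : (0 : A) ∈ annL mulA ∧ (0 : A) ∈ annR mulA) : glue φ e 0 = 0 := by
  rw [glue, dif_neg (not_not.mpr h0A.1), dif_neg (not_not.mpr h0A.2),
    dif_neg (by simp), dif_pos rfl]

lemma glue_rest (u : A) (hm : u ∈ Rst mulA) : glue φ e u = (e ⟨u, hm⟩).1 := by
  rw [glue, dif_neg (not_not.mpr hm.1), dif_neg (not_not.mpr hm.2.1),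
    dif_neg hm.2.2.1, dif_neg hm.2.2.2]

variable (hcol : ∀ x, (φ x).1.color = x.1.color)
    (hcol' : ∀ x, (φ.symm x).1.color = x.1.color)
    (h0A : (0 : A) ∈ annL mulA ∧ (0 : A) ∈ annR mulA)
    (h0B : (0 : B) ∈ annL mulB ∧ (0 : B) ∈ annR mulB)

include hcol hcol' h0A h0B

lemma glue_mem_annL (u : A) (h1 : u ∈ annL mulA) : glue φ e u ∈ annL mulB := by
  by_cases h2 : u ∉ annR mulA
  · rw [glue_case2 φ e u h1 h2]
    exact fc_mem_annL φ hcol hcol' u h1 h2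
  · have h2' := not_not.mp h2
    by_cases h3 : u ∈ derived mulA ∧ u ≠ 0
    · rw [glue_case3 φ e u h1 h2' h3]
      exact fs_mem_annL φ hcol hcol' u h3.1 h3.2 h1
    · by_cases h4 : u = 0
      · rw [h4, glue_zero φ e h0A]; exact h0B.1
      · rw [glue_rest φ e u ⟨h1, h2', h3, h4⟩]
        exact (e ⟨u, h1, h2', h3, h4⟩).2.1

lemma glue_mem_annR (u : A) (h2 : u ∈ annR mulA) : glue φ e u ∈ annR mulB := by
  by_cases h1 : u ∉ annL mulA
  · rw [glue_case1 φ e u h1]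
    exact fr_mem_annR φ hcol hcol' u h1 h2
  · have h1' := not_not.mp h1
    by_cases h3 : u ∈ derived mulA ∧ u ≠ 0
    · rw [glue_case3 φ e u h1' h2 h3]
      exact fs_mem_annR φ hcol hcol' u h3.1 h3.2 h2
    · by_cases h4 : u = 0
      · rw [h4, glue_zero φ e h0A]; exact h0B.2
      · rw [glue_rest φ e u ⟨h1', h2, h3, h4⟩]
        exact (e ⟨u, h1', h2, h3, h4⟩).2.2.1

omit hcol' h0A h0B in
lemma glue_eq_fs (u : A) (hd : u ∈ derived mulA) (h0 : u ≠ 0) : glue φ e u = fs φ u := by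
  by_cases h1 : u ∉ annL mulA
  · rw [glue_case1 φ e u h1]
    exact fr_eq_fs φ hcol u h1 hd h0
  · have h1' := not_not.mp h1
    by_cases h2 : u ∉ annR mulA
    · rw [glue_case2 φ e u h1' h2]
      exact fc_eq_fs φ hcol u h2 hd h0
    · exact glue_case3 φ e u h1' (not_not.mp h2) ⟨hd, h0⟩

lemma glue_glue (u : A) : glue φ.symm e.symm (glue φ e u) = u := by
  by_cases h1 : u ∉ annL mulA
  · rw [glue_case1 φ e u h1, glue_case1 φ.symm e.symm _ (fr_mem φ hcol u h1)]
    exact fr_fr φ hcol hcol' u h1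
  · have h1' := not_not.mp h1
    by_cases h2 : u ∉ annR mulA
    · rw [glue_case2 φ e u h1' h2,
        glue_case2 φ.symm e.symm _ (fc_mem_annL φ hcol hcol' u h1' h2) (fc_mem φ hcol u h2)]
      exact fc_fc φ hcol hcol' u h2
    · have h2' := not_not.mp h2
      by_cases h3 : u ∈ derived mulA ∧ u ≠ 0
      · rw [glue_case3 φ e u h1' h2' h3,
          glue_case3 φ.symm e.symm _ (fs_mem_annL φ hcol hcol' u h3.1 h3.2 h1')
            (fs_mem_annR φ hcol hcol' u h3.1 h3.2 h2') (fs_mem φ hcol u h3)]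
        exact fs_fs φ hcol hcol' u h3
      · by_cases h4 : u = 0
        · rw [h4, glue_zero φ e h0A, glue_zero φ.symm e.symm h0B]
        · have hm : u ∈ Rst mulA := ⟨h1', h2', h3, h4⟩
          rw [glue_rest φ e u hm, glue_rest φ.symm e.symm _ (e ⟨u, hm⟩).2]
          rw [Subtype.coe_eta, Equiv.symm_apply_apply]

lemma glue_mul (u v : A) :
    mulB (glue φ e u) (glue φ e v) = glue φ e (mulA u v) := by
  have glue_eq_fc : ∀ w : A, w ∉ annR mulA → glue φ e w = fc φ w := by
    intro w hw
    by_cases h1 : w ∉ annL mulA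
    · rw [glue_case1 φ e w h1]
      exact fr_eq_fc φ hcol w h1 hw
    · exact glue_case2 φ e w (not_not.mp h1) hw
  by_cases hm : mulA u v = 0
  · rw [hm, glue_zero φ e h0A]
    by_cases hu : u ∈ annL mulA
    · exact glue_mem_annL φ e hcol hcol' h0A h0B u hu _
    by_cases hv : v ∈ annR mulA
    · exact glue_mem_annR φ e hcol hcol' h0A h0B v hv _
    · rw [glue_case1 φ e u hu, glue_eq_fc v hv]
      by_contra hB
      have ht := t_spec φ.symm hcol' (fr φ u) (fc φ v) hB
      rw [fr_fr φ hcol hcol' u hu, fc_fc φ hcol hcol' v hv] at ht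
      have h2 := (φ.symm ⟨.t (fr φ u) (fc φ v), hB⟩).2
      rw [ht] at h2
      exact h2 hm
  · have hu : u ∉ annL mulA := fun h => hm (h v)
    have hv : v ∉ annR mulA := fun h => hm (h u)
    rw [glue_case1 φ e u hu, glue_eq_fc v hv,
      glue_eq_fs φ e hcol (mulA u v) ⟨u, v, rfl⟩ hm]
    exact t_mul φ hcol u v hm

end Glue

section Forward

variable {A B : Type*} [Zero A] [Zero B]

def vmap (g : A → B) : Vert A → Vert B
  | .r u => .r (g u)
  | .c u => .c (g u)
  | .s u => .s (g u)
  | .t u v => .t (g u) (g v)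

lemma vmap_vmap (g : A ≃ B) (x : Vert A) : vmap g.symm (vmap g x) = x := by
  cases x <;> simp [vmap]

variable {mulA : A → A → A} {mulB : B → B → B}

lemma annL_map (g : A ≃ B) (hg : ∀ u v, mulB (g u) (g v) = g (mulA u v))
    (hg0 : g 0 = 0) (u : A) : u ∈ annL mulA ↔ g u ∈ annL mulB := by
  constructor
  · intro h w
    have := hg u (g.symm w)
    rw [g.apply_symm_apply] at this
    rw [this, h _, hg0]
  · intro h w
    have h1 := hg u w
    rw [h (g w)] at h1
    apply g.injective
    rw [hg0]
    exact h1.symm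

lemma annR_map (g : A ≃ B) (hg : ∀ u v, mulB (g u) (g v) = g (mulA u v))
    (hg0 : g 0 = 0) (u : A) : u ∈ annR mulA ↔ g u ∈ annR mulB := by
  constructor
  · intro h w
    have := hg (g.symm w) u
    rw [g.apply_symm_apply] at this
    rw [this, h _, hg0]
  · intro h w
    have h1 := hg w u
    rw [h (g w)] at h1
    apply g.injective
    rw [hg0]
    exact h1.symm

lemma derived_map (g : A ≃ B) (hg : ∀ u v, mulB (g u) (g v) = g (mulA u v))
    (u : A) : u ∈ derived mulA ↔ g u ∈ derived mulB := by
  constructor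
  · rintro ⟨p, q, rfl⟩
    exact ⟨g p, g q, hg p q⟩
  · rintro ⟨p, q, hpq⟩
    refine ⟨g.symm p, g.symm q, ?_⟩
    apply g.injective
    rw [← hg]
    rw [g.apply_symm_apply, g.apply_symm_apply]
    exact hpq

lemma ne_zero_map (g : A ≃ B) (hg0 : g 0 = 0) (u : A) : u ≠ 0 ↔ g u ≠ 0 := by
  rw [← hg0]
  exact not_congr (Iff.symm g.apply_eq_iff_eq)

lemma isVert_map (g : A ≃ B) (hg : ∀ u v, mulB (g u) (g v) = g (mulA u v))
    (hg0 : g 0 = 0) (x : Vert A) : IsVert mulA x ↔ IsVert mulB (vmap g x) := by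
  cases x with
  | r u => exact not_congr (annL_map g hg hg0 u)
  | c u => exact not_congr (annR_map g hg hg0 u)
  | s u => exact and_congr (derived_map g hg u) (ne_zero_map g hg0 u)
  | t u v =>
    show mulA u v ≠ 0 ↔ mulB (g u) (g v) ≠ 0
    rw [hg]
    exact ne_zero_map g hg0 _

lemma g2adj_map (g : A ≃ B) (hg : ∀ u v, mulB (g u) (g v) = g (mulA u v))
    (hg0 : g 0 = 0) {x y : Vert A} (h : G2Adj mulA x y) :
    G2Adj mulB (vmap g x) (vmap g y) := by
  have hz : ∀ w : A, mulA w = 0 → True := fun _ _ => trivial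
  have hne : ∀ u v : A, mulA u v ≠ 0 → mulB (g u) (g v) ≠ 0 := by
    intro u v h0
    rw [hg]
    exact ((ne_zero_map g hg0 _).mp h0)
  cases h with
  | g1 h =>
    refine G2Adj.g1 ?_
    cases h with
    | rt u v h0 => exact G1Adj.rt _ _ (hne u v h0)
    | tr u v h0 => exact G1Adj.tr _ _ (hne u v h0)
    | ct u v h0 => exact G1Adj.ct _ _ (hne u v h0)
    | tc u v h0 => exact G1Adj.tc _ _ (hne u v h0)
    | st u v h0 =>
      have := G1Adj.st (g u) (g v) (hne u v h0)
      rwa [hg] at this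
    | ts u v h0 =>
      have := G1Adj.ts (g u) (g v) (hne u v h0)
      rwa [hg] at this
  | rc u hu =>
    refine G2Adj.rc _ (fun hm => hu ?_)
    exact ⟨(annL_map g hg hg0 u).mpr hm.1, (annR_map g hg hg0 u).mpr hm.2⟩
  | cr u hu =>
    refine G2Adj.cr _ (fun hm => hu ?_)
    exact ⟨(annL_map g hg hg0 u).mpr hm.1, (annR_map g hg hg0 u).mpr hm.2⟩
  | cs u hu =>
    exact G2Adj.cs _ ⟨(derived_map g hg u).mp hu.1, fun hm => hu.2 ((annR_map g hg hg0 u).mpr hm)⟩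
  | sc u hu =>
    exact G2Adj.sc _ ⟨(derived_map g hg u).mp hu.1, fun hm => hu.2 ((annR_map g hg hg0 u).mpr hm)⟩
  | rs u hu =>
    exact G2Adj.rs _ ⟨(derived_map g hg u).mp hu.1, fun hm => hu.2 ((annL_map g hg hg0 u).mpr hm)⟩
  | sr u hu =>
    exact G2Adj.sr _ ⟨(derived_map g hg u).mp hu.1, fun hm => hu.2 ((annL_map g hg hg0 u).mpr hm)⟩

lemma hg_symm (g : A ≃ B) (hg : ∀ u v, mulB (g u) (g v) = g (mulA u v)) :
    ∀ u v, mulA (g.symm u) (g.symm v) = g.symm (mulB u v) := by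
  intro u v
  apply g.injective
  rw [← hg, g.apply_symm_apply, g.apply_symm_apply, g.apply_symm_apply]

/-- Forward direction: a multiplicative bijection fixing `0` induces a
color-preserving isomorphism of the graphs `G₂`. -/
noncomputable def G2Iso (g : A ≃ B) (hg : ∀ u v, mulB (g u) (g v) = g (mulA u v))
    (hg0 : g 0 = 0) : (G2 mulA) ≃g (G2 mulB) where
  toFun x := ⟨vmap g x.1, (isVert_map g hg hg0 x.1).mp x.2⟩
  invFun y := ⟨vmap g.symm y.1, by
    have hg0' : g.symm 0 = 0 := by rw [← hg0, g.symm_apply_apply]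
    exact (isVert_map g.symm (hg_symm g hg) hg0' y.1).mp y.2⟩
  left_inv x := Subtype.ext (vmap_vmap g x.1)
  right_inv y := Subtype.ext (by
    have := vmap_vmap g.symm (y.1)
    rwa [g.symm_symm] at this)
  map_rel_iff' := by
    intro x y
    constructor
    · intro h
      have h' : G2Adj mulB (vmap g x.1) (vmap g y.1) := h
      have hg0' : g.symm 0 = 0 := by rw [← hg0, g.symm_apply_apply]
      have := g2adj_map g.symm (hg_symm g hg) hg0' h'
      rw [vmap_vmap g x.1, vmap_vmap g y.1] at this
      exact this
    · intro h
      exact g2adj_map g hg hg0 h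

lemma G2Iso_color (g : A ≃ B) (hg : ∀ u v, mulB (g u) (g v) = g (mulA u v))
    (hg0 : g 0 = 0) (x : {x : Vert A // IsVert mulA x}) :
    ((G2Iso g hg hg0) x).1.color = x.1.color := by
  cases hx : x.1 <;> simp [G2Iso, vmap, hx, Vert.color]

end Forward

section Cards

lemma card_partition {α : Type*} [Finite α] (s1 s2 s3 s4 s5 : Set α)
    (hU : (Set.univ : Set α) = s1 ∪ (s2 ∪ (s3 ∪ (s4 ∪ s5))))
    (d1 : Disjoint s1 (s2 ∪ (s3 ∪ (s4 ∪ s5)))) (d2 : Disjoint s2 (s3 ∪ (s4 ∪ s5)))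
    (d3 : Disjoint s3 (s4 ∪ s5)) (d4 : Disjoint s4 s5) :
    Nat.card α = s1.ncard + (s2.ncard + (s3.ncard + (s4.ncard + s5.ncard))) := by
  rw [← Set.ncard_univ, hU, Set.ncard_union_eq d1, Set.ncard_union_eq d2,
    Set.ncard_union_eq d3, Set.ncard_union_eq d4]

end Cards

theorem stmt_17 {K A A' : Type*} [Field K] [Finite K]
    [AddCommGroup A] [Module K A] [AddCommGroup A'] [Module K A']
    [Module.Finite K A] [Module.Finite K A'] (n : ℕ)
    (hA : Module.finrank K A = n) (hA' : Module.finrank K A' = n)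
    (mul : A →ₗ[K] A →ₗ[K] A) (mul' : A' →ₗ[K] A' →ₗ[K] A') :
    ((∃ f : A ≃ₗ[K] A', ∀ u v : A, mul' (f u) (f v) = f (mul u v)) →
      ∃ φ : (G2 fun a b : A => mul a b) ≃g (G2 fun a b : A' => mul' a b),
        ∀ x, (φ x).1.color = x.1.color) ∧
    ((∃ φ : (G2 fun a b : A => mul a b) ≃g (G2 fun a b : A' => mul' a b),
        ∀ x, (φ x).1.color = x.1.color) →
      ∃ f : A → A', Function.Bijective f ∧
        ∀ u v : A, mul' (f u) (f v) = f (mul u v)) := by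
  have hfinA : Finite A := Module.finite_iff_finite (R := K).mp ‹Module.Finite K A›
  have hfinA' : Finite A' := Module.finite_iff_finite (R := K).mp ‹Module.Finite K A'›
  have h0A : (0 : A) ∈ annL (fun a b : A => mul a b) ∧
      (0 : A) ∈ annR (fun a b : A => mul a b) :=
    ⟨fun v => by simp, fun v => by simp⟩
  have h0B : (0 : A') ∈ annL (fun a b : A' => mul' a b) ∧
      (0 : A') ∈ annR (fun a b : A' => mul' a b) :=
    ⟨fun v => by simp, fun v => by simp⟩
  constructor
  · rintro ⟨f, hf⟩
    exact ⟨G2Iso f.toEquiv (fun u v => hf u v) (map_zero f),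
      G2Iso_color f.toEquiv (fun u v => hf u v) (map_zero f)⟩
  · rintro ⟨φ, hcol⟩
    have hcol' : ∀ x, (φ.symm x).1.color = x.1.color := by
      intro y
      have := hcol (φ.symm y)
      rw [φ.apply_symm_apply] at this
      exact this.symm
    have hss : φ.symm.symm = φ := rfl
    have hcol2 : ∀ x, (φ.symm.symm x).1.color = x.1.color := by
      rw [hss]; exact hcol
    -- cardinality of the residual sets
    have hcard : Nat.card A = Nat.card A' :=
      Nat.card_congr (LinearEquiv.ofFinrankEq A A' (R := K) (hA.trans hA'.symm)).toEquiv
    have e1 : ↥{u : A | u ∉ annL fun a b : A => mul a b} ≃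
        ↥{u : A' | u ∉ annL fun a b : A' => mul' a b} :=
      { toFun := fun x => ⟨fr φ x.1, fr_mem φ hcol x.1 x.2⟩
        invFun := fun y => ⟨fr φ.symm y.1, fr_mem φ.symm hcol' y.1 y.2⟩
        left_inv := fun x => Subtype.ext (fr_fr φ hcol hcol' x.1 x.2)
        right_inv := fun y => Subtype.ext (by
          have := fr_fr φ.symm hcol' hcol2 y.1 y.2
          rwa [hss] at this) }
    have e2 : ↥{u : A | u ∈ (annL fun a b : A => mul a b) ∧
          u ∉ annR fun a b : A => mul a b} ≃
        ↥{u : A' | u ∈ (annL fun a b : A' => mul' a b) ∧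
          u ∉ annR fun a b : A' => mul' a b} :=
      { toFun := fun x => ⟨fc φ x.1,
          ⟨fc_mem_annL φ hcol hcol' x.1 x.2.1 x.2.2, fc_mem φ hcol x.1 x.2.2⟩⟩
        invFun := fun y => ⟨fc φ.symm y.1,
          ⟨fc_mem_annL φ.symm hcol' hcol2 y.1 y.2.1 y.2.2, fc_mem φ.symm hcol' y.1 y.2.2⟩⟩
        left_inv := fun x => Subtype.ext (fc_fc φ hcol hcol' x.1 x.2.2)
        right_inv := fun y => Subtype.ext (by
          have := fc_fc φ.symm hcol' hcol2 y.1 y.2.2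
          rwa [hss] at this) }
    have e3 : ↥{u : A | (u ∈ (annL fun a b : A => mul a b) ∧
          u ∈ (annR fun a b : A => mul a b)) ∧
          (u ∈ (derived fun a b : A => mul a b) ∧ u ≠ 0)} ≃
        ↥{u : A' | (u ∈ (annL fun a b : A' => mul' a b) ∧
          u ∈ (annR fun a b : A' => mul' a b)) ∧
          (u ∈ (derived fun a b : A' => mul' a b) ∧ u ≠ 0)} :=
      { toFun := fun x => ⟨fs φ x.1,
          ⟨⟨fs_mem_annL φ hcol hcol' x.1 x.2.2.1 x.2.2.2 x.2.1.1,
            fs_mem_annR φ hcol hcol' x.1 x.2.2.1 x.2.2.2 x.2.1.2⟩,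
            fs_mem φ hcol x.1 x.2.2⟩⟩
        invFun := fun y => ⟨fs φ.symm y.1,
          ⟨⟨fs_mem_annL φ.symm hcol' hcol2 y.1 y.2.2.1 y.2.2.2 y.2.1.1,
            fs_mem_annR φ.symm hcol' hcol2 y.1 y.2.2.1 y.2.2.2 y.2.1.2⟩,
            fs_mem φ.symm hcol' y.1 y.2.2⟩⟩
        left_inv := fun x => Subtype.ext (fs_fs φ hcol hcol' x.1 x.2.2)
        right_inv := fun y => Subtype.ext (by
          have := fs_fs φ.symm hcol' hcol2 y.1 y.2.2
          rwa [hss] at this) }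
    have hPA := card_partition
      {u : A | u ∉ annL fun a b : A => mul a b}
      {u : A | u ∈ (annL fun a b : A => mul a b) ∧ u ∉ annR fun a b : A => mul a b}
      {u : A | (u ∈ (annL fun a b : A => mul a b) ∧ u ∈ (annR fun a b : A => mul a b)) ∧
        (u ∈ (derived fun a b : A => mul a b) ∧ u ≠ 0)}
      {(0 : A)} (Rst fun a b : A => mul a b)
      (by
        ext u
        simp only [Set.mem_univ, Set.mem_union, Set.mem_setOf_eq, Set.mem_singleton_iff,
          Rst, true_iff]
        tauto)
      (by
        rw [Set.disjoint_left]
        rintro a ha hb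
        simp only [Set.mem_union, Set.mem_setOf_eq, Set.mem_singleton_iff, Rst] at hb
        rcases hb with h | h | rfl | h
        · exact ha h.1
        · exact ha h.1.1
        · exact ha h0A.1
        · exact ha h.1)
      (by
        rw [Set.disjoint_left]
        rintro a ha hb
        simp only [Set.mem_union, Set.mem_setOf_eq, Set.mem_singleton_iff, Rst] at hb
        rcases hb with h | rfl | h
        · exact ha.2 h.1.2
        · exact ha.2 h0A.2
        · exact ha.2 h.2.1)
      (by
        rw [Set.disjoint_left]
        rintro a ha hb
        simp only [Set.mem_union, Set.mem_singleton_iff, Rst, Set.mem_setOf_eq] at hb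
        rcases hb with rfl | h
        · exact ha.2.2 rfl
        · exact h.2.2.1 ha.2)
      (by
        rw [Set.disjoint_left]
        rintro a rfl hb
        exact hb.2.2.2 rfl)
    have hPB := card_partition
      {u : A' | u ∉ annL fun a b : A' => mul' a b}
      {u : A' | u ∈ (annL fun a b : A' => mul' a b) ∧ u ∉ annR fun a b : A' => mul' a b}
      {u : A' | (u ∈ (annL fun a b : A' => mul' a b) ∧ u ∈ (annR fun a b : A' => mul' a b)) ∧
        (u ∈ (derived fun a b : A' => mul' a b) ∧ u ≠ 0)}
      {(0 : A')} (Rst fun a b : A' => mul' a b)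
      (by
        ext u
        simp only [Set.mem_univ, Set.mem_union, Set.mem_setOf_eq, Set.mem_singleton_iff,
          Rst, true_iff]
        tauto)
      (by
        rw [Set.disjoint_left]
        rintro a ha hb
        simp only [Set.mem_union, Set.mem_setOf_eq, Set.mem_singleton_iff, Rst] at hb
        rcases hb with h | h | rfl | h
        · exact ha h.1
        · exact ha h.1.1
        · exact ha h0B.1
        · exact ha h.1)
      (by
        rw [Set.disjoint_left]
        rintro a ha hb
        simp only [Set.mem_union, Set.mem_setOf_eq, Set.mem_singleton_iff, Rst] at hb
        rcases hb with h | rfl | h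
        · exact ha.2 h.1.2
        · exact ha.2 h0B.2
        · exact ha.2 h.2.1)
      (by
        rw [Set.disjoint_left]
        rintro a ha hb
        simp only [Set.mem_union, Set.mem_singleton_iff, Rst, Set.mem_setOf_eq] at hb
        rcases hb with rfl | h
        · exact ha.2.2 rfl
        · exact h.2.2.1 ha.2)
      (by
        rw [Set.disjoint_left]
        rintro a rfl hb
        exact hb.2.2.2 rfl)
    have hn1 := Nat.card_congr e1
    have hn2 := Nat.card_congr e2
    have hn3 := Nat.card_congr e3
    rw [Nat.card_coe_set_eq, Nat.card_coe_set_eq] at hn1 hn2 hn3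
    have hRst : (Rst fun a b : A => mul a b).ncard =
        (Rst fun a b : A' => mul' a b).ncard := by
      rw [Set.ncard_singleton] at hPA hPB
      omega
    have e5 : ↥(Rst fun a b : A => mul a b) ≃ ↥(Rst fun a b : A' => mul' a b) := by
      letI := Fintype.ofFinite ↥(Rst fun a b : A => mul a b)
      letI := Fintype.ofFinite ↥(Rst fun a b : A' => mul' a b)
      exact Fintype.equivOfCardEq (by
        rw [← Nat.card_eq_fintype_card, ← Nat.card_eq_fintype_card,
          Nat.card_coe_set_eq, Nat.card_coe_set_eq]
        exact hRst)
    refine ⟨glue φ e5, ⟨?_, ?_⟩, fun u v => glue_mul φ e5 hcol hcol' h0A h0B u v⟩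
    · intro a b hab
      have ha := glue_glue φ e5 hcol hcol' h0A h0B a
      have hb := glue_glue φ e5 hcol hcol' h0A h0B b
      rw [← ha, ← hb, hab]
    · intro w
      refine ⟨glue φ.symm e5.symm w, ?_⟩
      have := glue_glue φ.symm e5.symm hcol' hcol2 h0B h0A w
      rwa [hss, Equiv.symm_symm] at this
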